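/- Scalar parareal recursion bound: let x > 0, C₀ ≥ 0, and suppose sequences (ε_n^{(k)})_{n≥0,k≥0} of nonnegative reals satisfy ε_0^{(k)} = 0 for all k, and ε_n^{(k+1)} ≤ R · ∑_{m=0}^{n−1} (1+x)^{−(n−1−m)} · ε_m^{(k)} for all n ≥ 1 and k ≥ 0, where R ≤ min(1, x²). If sup_n ε_n^{(0)} ≤ C₀, then for every k, sup_n ε_n^{(k)} ≤ 2^k · min(1, x)^k · C₀. -/

import Mathlib

theorem stmt_17 (x : ℝ) (hx : 0 < x) (C0 : ℝ) (hC0 : 0 ≤ C0) (R : ℝ)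
    (hR : R ≤ min 1 (x ^ 2)) (ε : ℕ → ℕ → ℝ) (hpos : ∀ k n, 0 ≤ ε k n)
    (hinit : ∀ k, ε k 0 = 0)
    (hrec : ∀ k, ∀ n, 1 ≤ n →
      ε (k + 1) n ≤ R * ∑ m ∈ Finset.range n, ((1 + x) ^ (n - 1 - m))⁻¹ * ε k m)
    (hsup : ∀ n, ε 0 n ≤ C0) :
    ∀ k n, ε k n ≤ 2 ^ k * (min 1 x) ^ k * C0 := by
  have hmin : 0 < min 1 x := lt_min one_pos hx
  have h1x : (0:ℝ) < 1 + x := by linarith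
  intro k
  induction k with
  | zero => intro n; simpa using hsup n
  | succ k ih =>
    intro n
    set B := 2 ^ k * (min 1 x) ^ k * C0 with hB
    have hBnn : 0 ≤ B := by positivity
    have hgoal : (2 : ℝ) ^ (k + 1) * (min 1 x) ^ (k + 1) * C0 = 2 * min 1 x * B := by
      ring
    rw [hgoal]
    rcases Nat.eq_zero_or_pos n with rfl | hn
    · rw [hinit]
      positivity
    have hy0 : (0:ℝ) ≤ (1 + x)⁻¹ := by positivity
    have hy1 : (1 + x)⁻¹ < 1 := by
      rw [inv_lt_one_iff₀]; right; linarith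
    have hcoef : ∑ m ∈ Finset.range n, ((1 + x) ^ (n - 1 - m))⁻¹ ≤ (1 + x) / x := by
      have hre : ∑ m ∈ Finset.range n, ((1 + x) ^ (n - 1 - m))⁻¹
          = ∑ j ∈ Finset.range n, ((1 + x)⁻¹) ^ j := by
        rw [← Finset.sum_range_reflect (fun j => ((1 + x)⁻¹) ^ j) n]
        exact Finset.sum_congr rfl fun m _ => by rw [← inv_pow]
      rw [hre]
      have hgs := geom_sum_Ico_le_of_lt_one hy0 hy1 (m := 0) (n := n)
      rw [Finset.range_eq_Ico]
      calc ∑ j ∈ Finset.Ico 0 n, ((1 + x)⁻¹) ^ j ≤ (1 + x)⁻¹ ^ 0 / (1 - (1 + x)⁻¹) := hgs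
        _ = (1 + x) / x := by
            rw [pow_zero]
            field_simp
            rw [add_sub_cancel_left]; exact div_self hx.ne'
    -- bound the sum
    have hS0 : 0 ≤ ∑ m ∈ Finset.range n, ((1 + x) ^ (n - 1 - m))⁻¹ * ε k m := by
      apply Finset.sum_nonneg
      intro m _
      exact mul_nonneg (by positivity) (hpos k m)
    have hS : ∑ m ∈ Finset.range n, ((1 + x) ^ (n - 1 - m))⁻¹ * ε k m
        ≤ ((1 + x) / x) * B := by
      calc ∑ m ∈ Finset.range n, ((1 + x) ^ (n - 1 - m))⁻¹ * ε k m
          ≤ ∑ m ∈ Finset.range n, ((1 + x) ^ (n - 1 - m))⁻¹ * B := by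
            apply Finset.sum_le_sum
            intro m _
            exact mul_le_mul_of_nonneg_left (ih m) (by positivity)
        _ = (∑ m ∈ Finset.range n, ((1 + x) ^ (n - 1 - m))⁻¹) * B := by
            rw [Finset.sum_mul]
        _ ≤ ((1 + x) / x) * B := mul_le_mul_of_nonneg_right hcoef hBnn
    have hkey : min 1 (x ^ 2) * ((1 + x) / x) ≤ 2 * min 1 x := by
      rcases le_total x 1 with h | h
      · rw [min_eq_right (by nlinarith : x ^ 2 ≤ 1), min_eq_right h]
        have he : x ^ 2 * ((1 + x) / x) = x * (1 + x) := by field_simp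
        rw [he]; nlinarith
      · rw [min_eq_left (by nlinarith : (1:ℝ) ≤ x ^ 2), min_eq_left h, one_mul,
          div_le_iff₀ hx]
        nlinarith
    calc ε (k + 1) n ≤ R * ∑ m ∈ Finset.range n, ((1 + x) ^ (n - 1 - m))⁻¹ * ε k m :=
          hrec k n hn
      _ ≤ min 1 (x ^ 2) * ∑ m ∈ Finset.range n, ((1 + x) ^ (n - 1 - m))⁻¹ * ε k m :=
          mul_le_mul_of_nonneg_right hR hS0
      _ ≤ min 1 (x ^ 2) * (((1 + x) / x) * B) :=
          mul_le_mul_of_nonneg_left hS (le_min zero_le_one (by positivity))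
      _ = (min 1 (x ^ 2) * ((1 + x) / x)) * B := by ring
      _ ≤ (2 * min 1 x) * B := mul_le_mul_of_nonneg_right hkey hBnn
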